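/- arXiv:2007.06056 — 10 statements merged into one kernel-verified Lean document; each statement's English description precedes it below -/
import Mathlib

section
/- Let n ≥ 1 and let (χ_j, γ_j) ∈ ℝ² for j = 1,…,n be the S₁-centric coordinates of a point set (so χ_1 = 0 and γ_1 = 0), and assume Σ_{j=1}^n χ_j ≠ 0. For each natural number k, define the least-squares error of the system in which S₁ is repeated k extra times by E_k(m, b) = k·b² + Σ_{j=1}^n (m·χ_j + b − γ_j)². If (m, b) ∈ ℝ² is a global minimizer of E_k, then m·χ̃ + b = γ̃, where χ̃ = (Σ_{j=1}^n χ_j²)/(Σ_{j=1}^n χ_j) and γ̃ = (Σ_{j=1}^n χ_j γ_j)/(Σ_{j=1}^n χ_j). In particular, the least-squares regression line passes through the pivot point (χ̃, γ̃) regardless of the number k of repetitions of S₁. -/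
/-- For S₁-centric coordinates (χ 0 = 0, γ 0 = 0) with ∑ χ_j ≠ 0,
any global minimizer (m, b) of the least-squares error with S₁ repeated k extra
times satisfies m·χ̃ + b = γ̃, where (χ̃, γ̃) is the pivot point. -/
theorem stmt_0 (n : ℕ) (hn : 1 ≤ n) (χ γ : Fin n → ℝ)
    (hχ1 : χ ⟨0, hn⟩ = 0) (hγ1 : γ ⟨0, hn⟩ = 0)
    (hB : (∑ j, χ j) ≠ 0) (k : ℕ) (m b : ℝ)
    (hmin : ∀ m' b' : ℝ,
      (k : ℝ) * b ^ 2 + ∑ j, (m * χ j + b - γ j) ^ 2 ≤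
      (k : ℝ) * b' ^ 2 + ∑ j, (m' * χ j + b' - γ j) ^ 2) :
    m * ((∑ j, (χ j) ^ 2) / (∑ j, χ j)) + b = (∑ j, χ j * γ j) / (∑ j, χ j) := by
  set S1 := ∑ j, χ j with hS1
  set S2 := ∑ j, (χ j) ^ 2 with hS2
  set Sxy := ∑ j, χ j * γ j with hSxy
  have hC : 0 < S2 := by
    rcases lt_or_eq_of_le (Finset.sum_nonneg fun j _ => sq_nonneg (χ j)) with h | h
    · exact h
    · exfalso; apply hB
      have hz : ∀ j ∈ Finset.univ, χ j = 0 := by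
        intro j _
        have hj := (Finset.sum_eq_zero_iff_of_nonneg
          (fun j (_ : j ∈ Finset.univ) => sq_nonneg (χ j))).mp h.symm j (Finset.mem_univ j)
        exact pow_eq_zero_iff two_ne_zero |>.mp hj
      exact Finset.sum_eq_zero hz
  have key : ∀ t : ℝ, 0 ≤ 2 * t * (m * S2 + b * S1 - Sxy) + t ^ 2 * S2 := by
    intro t
    have h := hmin (m + t) b
    have expand : ∑ j, ((m + t) * χ j + b - γ j) ^ 2 =
        (∑ j, (m * χ j + b - γ j) ^ 2) + (2 * t * (m * S2 + b * S1 - Sxy) + t ^ 2 * S2) := by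
      rw [hS1, hS2, hSxy]
      simp only [Finset.mul_sum, mul_sub, mul_add, ← Finset.sum_sub_distrib,
        ← Finset.sum_add_distrib]
      exact Finset.sum_congr rfl fun j _ => by ring
    rw [expand] at h
    linarith
  have hA : m * S2 + b * S1 - Sxy = 0 := by
    by_contra hA0
    set A := m * S2 + b * S1 - Sxy with hAdef
    have h1 := key (-A / S2)
    have h2 : 2 * (-A / S2) * A + (-A / S2) ^ 2 * S2 = -(A ^ 2) / S2 := by
      field_simp; ring
    rw [h2] at h1
    have h3 : -(A ^ 2) / S2 = -(A ^ 2 / S2) := by ring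
    rw [h3] at h1
    have : 0 < A ^ 2 / S2 := div_pos (by positivity) hC
    linarith
  field_simp
  linarith [hA]
end

section
/- Let S_j = (x_j, y_j) ∈ ℝ² for j = 1, 2, 3, 4 with x_1 ≤ x_2 ≤ x_3 ≤ x_4 and x_1 < x_4, and let δ_1, δ_2, δ_3, δ_4 > 0. Then the pivot point P_4 = (x̃_4, ỹ_4) of S_4, where x̃_4 = x_4 + (Σ_{j=1}^4 δ_j(x_j − x_4)²)/(Σ_{j=1}^4 δ_j(x_j − x_4)) and ỹ_4 = y_4 + (Σ_{j=1}^4 δ_j(x_j − x_4)(y_j − y_4))/(Σ_{j=1}^4 δ_j(x_j − x_4)), lies in the convex hull of {S_1, S_2, S_3}. That is, the pivot points corresponding to the rightmost point on the x-axis are bounded by the triangle whose vertices are the three other points, for every choice of positive repetition weights. -/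
/-- With four points ordered x₁ ≤ x₂ ≤ x₃ ≤ x₄, x₁ < x₄, and
positive weights, the pivot point of the rightmost point S₄ lies in the convex
hull (triangle) of the other three points S₁, S₂, S₃. -/
theorem stmt_4 (x₁ x₂ x₃ x₄ y₁ y₂ y₃ y₄ δ₁ δ₂ δ₃ δ₄ : ℝ)
    (h12 : x₁ ≤ x₂) (h23 : x₂ ≤ x₃) (h34 : x₃ ≤ x₄) (h14 : x₁ < x₄)
    (hδ₁ : 0 < δ₁) (hδ₂ : 0 < δ₂) (hδ₃ : 0 < δ₃) (hδ₄ : 0 < δ₄) :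
    ((x₄ + (δ₁ * (x₁ - x₄) ^ 2 + δ₂ * (x₂ - x₄) ^ 2 + δ₃ * (x₃ - x₄) ^ 2 +
              δ₄ * (x₄ - x₄) ^ 2) /
            (δ₁ * (x₁ - x₄) + δ₂ * (x₂ - x₄) + δ₃ * (x₃ - x₄) + δ₄ * (x₄ - x₄)),
      y₄ + (δ₁ * (x₁ - x₄) * (y₁ - y₄) + δ₂ * (x₂ - x₄) * (y₂ - y₄) +
              δ₃ * (x₃ - x₄) * (y₃ - y₄) + δ₄ * (x₄ - x₄) * (y₄ - y₄)) /
            (δ₁ * (x₁ - x₄) + δ₂ * (x₂ - x₄) + δ₃ * (x₃ - x₄) + δ₄ * (x₄ - x₄)))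
        : ℝ × ℝ) ∈
      convexHull ℝ ({(x₁, y₁), (x₂, y₂), (x₃, y₃)} : Set (ℝ × ℝ)) := by
  set w : Fin 3 → ℝ := ![δ₁ * (x₄ - x₁), δ₂ * (x₄ - x₂), δ₃ * (x₄ - x₃)] with hw
  set z : Fin 3 → ℝ × ℝ := ![(x₁, y₁), (x₂, y₂), (x₃, y₃)] with hz
  have hw0 : ∀ i ∈ Finset.univ, 0 ≤ w i := by
    intro i _
    fin_cases i <;> simp [hw] <;>
      exact mul_nonneg (by positivity) (by linarith)
  have hws : 0 < ∑ i ∈ Finset.univ, w i := by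
    have h1 : 0 < δ₁ * (x₄ - x₁) := mul_pos hδ₁ (by linarith)
    have h2 : 0 ≤ δ₂ * (x₄ - x₂) := mul_nonneg hδ₂.le (by linarith)
    have h3 : 0 ≤ δ₃ * (x₄ - x₃) := mul_nonneg hδ₃.le (by linarith)
    simp [hw, Fin.sum_univ_three]
    linarith
  have hzs : ∀ i ∈ Finset.univ, z i ∈ ({(x₁, y₁), (x₂, y₂), (x₃, y₃)} : Set (ℝ × ℝ)) := by
    intro i _
    fin_cases i <;> simp [hz]
  have hmem := Finset.centerMass_mem_convexHull Finset.univ hw0 hws hzs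
  have hsum : ∑ i ∈ Finset.univ, w i =
      δ₁ * (x₄ - x₁) + δ₂ * (x₄ - x₂) + δ₃ * (x₄ - x₃) := by
    simp [hw, Fin.sum_univ_three]
  have hDne : δ₁ * (x₄ - x₁) + δ₂ * (x₄ - x₂) + δ₃ * (x₄ - x₃) ≠ 0 := by
    rw [← hsum]; exact hws.ne'
  convert hmem using 1
  rw [Finset.centerMass]
  simp only [hw, hz, Fin.sum_univ_three, Matrix.cons_val_zero, Matrix.cons_val_one,
    Matrix.head_cons, Matrix.cons_val_two, Matrix.tail_cons, hsum,
    Prod.smul_mk, smul_eq_mul, Prod.mk_add_mk]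
  have hDne2 : δ₁ * (x₁ - x₄) + δ₂ * (x₂ - x₄) + δ₃ * (x₃ - x₄) + δ₄ * (x₄ - x₄) ≠ 0 := by
    intro h; apply hDne; linarith
  have e1 : δ₁ * (x₁ - x₄) + δ₂ * (x₂ - x₄) + δ₃ * (x₃ - x₄) + δ₄ * (x₄ - x₄)
      = -(δ₁ * (x₄ - x₁) + δ₂ * (x₄ - x₂) + δ₃ * (x₄ - x₃)) := by ring
  rw [Prod.mk.injEq]
  constructor <;> rw [e1] <;>
    rw [div_neg, eq_comm, inv_mul_eq_div, div_eq_iff hDne] <;>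
    field_simp <;> ring
end

section
/- Let S_j = (x_j, y_j) ∈ ℝ² for j = 1, 2, 3, 4 with x_1 ≤ x_2 ≤ x_3 ≤ x_4 and x_1 < x_4, and let δ_1, δ_2, δ_3, δ_4 > 0. Then the pivot point P_1 = (x̃_1, ỹ_1) of S_1, where x̃_1 = x_1 + (Σ_{j=1}^4 δ_j(x_j − x_1)²)/(Σ_{j=1}^4 δ_j(x_j − x_1)) and ỹ_1 = y_1 + (Σ_{j=1}^4 δ_j(x_j − x_1)(y_j − y_1))/(Σ_{j=1}^4 δ_j(x_j − x_1)), lies in the convex hull of {S_2, S_3, S_4}. That is, the pivot points corresponding to the leftmost point on the x-axis are bounded by the triangle whose vertices are the three other points, for every choice of positive repetition weights. -/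
/-- With four points ordered x₁ ≤ x₂ ≤ x₃ ≤ x₄, x₁ < x₄, and
positive weights, the pivot point of the leftmost point S₁ lies in the convex
hull (triangle) of the other three points S₂, S₃, S₄. -/
theorem stmt_5 (x₁ x₂ x₃ x₄ y₁ y₂ y₃ y₄ δ₁ δ₂ δ₃ δ₄ : ℝ)
    (h12 : x₁ ≤ x₂) (h23 : x₂ ≤ x₃) (h34 : x₃ ≤ x₄) (h14 : x₁ < x₄)
    (hδ₁ : 0 < δ₁) (hδ₂ : 0 < δ₂) (hδ₃ : 0 < δ₃) (hδ₄ : 0 < δ₄) :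
    ((x₁ + (δ₁ * (x₁ - x₁) ^ 2 + δ₂ * (x₂ - x₁) ^ 2 + δ₃ * (x₃ - x₁) ^ 2 +
              δ₄ * (x₄ - x₁) ^ 2) /
            (δ₁ * (x₁ - x₁) + δ₂ * (x₂ - x₁) + δ₃ * (x₃ - x₁) + δ₄ * (x₄ - x₁)),
      y₁ + (δ₁ * (x₁ - x₁) * (y₁ - y₁) + δ₂ * (x₂ - x₁) * (y₂ - y₁) +
              δ₃ * (x₃ - x₁) * (y₃ - y₁) + δ₄ * (x₄ - x₁) * (y₄ - y₁)) /
            (δ₁ * (x₁ - x₁) + δ₂ * (x₂ - x₁) + δ₃ * (x₃ - x₁) + δ₄ * (x₄ - x₁)))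
        : ℝ × ℝ) ∈
      convexHull ℝ ({(x₂, y₂), (x₃, y₃), (x₄, y₄)} : Set (ℝ × ℝ)) := by
  have ha₂ : 0 ≤ x₂ - x₁ := by linarith
  have ha₃ : 0 ≤ x₃ - x₁ := by linarith
  have ha₄ : 0 < x₄ - x₁ := by linarith
  have hw₂ : 0 ≤ δ₂ * (x₂ - x₁) := mul_nonneg hδ₂.le ha₂
  have hw₃ : 0 ≤ δ₃ * (x₃ - x₁) := mul_nonneg hδ₃.le ha₃
  have hw₄ : 0 < δ₄ * (x₄ - x₁) := mul_pos hδ₄ ha₄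
  have hD : 0 < δ₂ * (x₂ - x₁) + δ₃ * (x₃ - x₁) + δ₄ * (x₄ - x₁) := by linarith
  have key := Finset.centerMass_mem_convexHull (Finset.univ : Finset (Fin 3))
    (w := ![δ₂ * (x₂ - x₁), δ₃ * (x₃ - x₁), δ₄ * (x₄ - x₁)])
    (z := ![((x₂, y₂) : ℝ × ℝ), (x₃, y₃), (x₄, y₄)])
    (s := ({(x₂, y₂), (x₃, y₃), (x₄, y₄)} : Set (ℝ × ℝ)))
    (by intro i _; fin_cases i <;> simp [hw₂, hw₃, hw₄.le])
    (by simpa [Fin.sum_univ_three] using hD)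
    (by intro i _; fin_cases i <;> simp)
  have hcm : (Finset.univ : Finset (Fin 3)).centerMass
      ![δ₂ * (x₂ - x₁), δ₃ * (x₃ - x₁), δ₄ * (x₄ - x₁)]
      ![((x₂, y₂) : ℝ × ℝ), (x₃, y₃), (x₄, y₄)] =
      ((x₁ + (δ₁ * (x₁ - x₁) ^ 2 + δ₂ * (x₂ - x₁) ^ 2 + δ₃ * (x₃ - x₁) ^ 2 +
              δ₄ * (x₄ - x₁) ^ 2) /
            (δ₁ * (x₁ - x₁) + δ₂ * (x₂ - x₁) + δ₃ * (x₃ - x₁) + δ₄ * (x₄ - x₁)),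
      y₁ + (δ₁ * (x₁ - x₁) * (y₁ - y₁) + δ₂ * (x₂ - x₁) * (y₂ - y₁) +
              δ₃ * (x₃ - x₁) * (y₃ - y₁) + δ₄ * (x₄ - x₁) * (y₄ - y₁)) /
            (δ₁ * (x₁ - x₁) + δ₂ * (x₂ - x₁) + δ₃ * (x₃ - x₁) + δ₄ * (x₄ - x₁)))
        : ℝ × ℝ) := by
    simp only [Finset.centerMass, Fin.sum_univ_three, Matrix.cons_val_zero,
      Matrix.cons_val_one, Matrix.head_cons, Matrix.cons_val_two, Matrix.tail_cons,
      Prod.smul_mk, smul_eq_mul, Prod.mk_add_mk]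
    have hD' : δ₂ * (x₂ - x₁) + δ₃ * (x₃ - x₁) + δ₄ * (x₄ - x₁) ≠ 0 := hD.ne'
    ext <;> simp <;> field_simp <;> ring
  rwa [hcm] at key
end

section
/- Let x_1, x_2, x_3, x_4 ∈ ℝ with x_1 ≤ x_2 ≤ x_3 ≤ x_4 and positive weights δ_1, δ_2, δ_3, δ_4 > 0. Fix i ∈ {1, 2, 3, 4}, write χ_j = x_j − x_i, assume D = Σ_{j ≠ i} δ_j·χ_j ≠ 0, and let (λ_a, λ_b, λ_c) be the barycentric coordinates λ_j = δ_j·χ_j/D of the pivot point P_i with respect to the other three points listed in increasing order of index (equivalently, of x-coordinate). Then it is never the case that (λ_a > 0 and λ_b < 0 and λ_c > 0), and never the case that (λ_a < 0 and λ_b > 0 and λ_c < 0). That is, with four points, a pivot point cannot lie in the (+,−,+) or (−,+,−) region of the triangle formed by the other three points. -/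
/-- With four x-monotonically-indexed points and positive weights,
for any index i and the other three indices a < b < c, the barycentric
coordinates (λ_a, λ_b, λ_c) of the pivot point P_i never exhibit the sign
pattern (+,−,+) or (−,+,−). -/
theorem stmt_8 (x δ : Fin 4 → ℝ) (hmono : Monotone x) (hδ : ∀ j, 0 < δ j)
    (i a b c : Fin 4) (hab : a < b) (hbc : b < c)
    (ha : a ≠ i) (hb : b ≠ i) (hc : c ≠ i)
    (hD : δ a * (x a - x i) + δ b * (x b - x i) + δ c * (x c - x i) ≠ 0) :
    ¬ (0 < δ a * (x a - x i) / (δ a * (x a - x i) + δ b * (x b - x i) + δ c * (x c - x i)) ∧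
       δ b * (x b - x i) / (δ a * (x a - x i) + δ b * (x b - x i) + δ c * (x c - x i)) < 0 ∧
       0 < δ c * (x c - x i) / (δ a * (x a - x i) + δ b * (x b - x i) + δ c * (x c - x i))) ∧
    ¬ (δ a * (x a - x i) / (δ a * (x a - x i) + δ b * (x b - x i) + δ c * (x c - x i)) < 0 ∧
       0 < δ b * (x b - x i) / (δ a * (x a - x i) + δ b * (x b - x i) + δ c * (x c - x i)) ∧
       δ c * (x c - x i) / (δ a * (x a - x i) + δ b * (x b - x i) + δ c * (x c - x i)) < 0) := by
  set A := δ a * (x a - x i) with hA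
  set B := δ b * (x b - x i) with hB
  set C := δ c * (x c - x i) with hC
  have hxab : x a ≤ x b := hmono hab.le
  have hxbc : x b ≤ x c := hmono hbc.le
  have hδa := hδ a
  have hδb := hδ b
  have hδc := hδ c
  have hAB : 0 < A → 0 < B := by
    intro h
    rcases mul_pos_iff.mp h with ⟨_, h2⟩ | ⟨h1, _⟩
    · exact mul_pos hδb (by linarith)
    · linarith
  have hBC : 0 < B → 0 < C := by
    intro h
    rcases mul_pos_iff.mp h with ⟨_, h2⟩ | ⟨h1, _⟩
    · exact mul_pos hδc (by linarith)
    · linarith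
  constructor
  · rintro ⟨h1, h2, h3⟩
    rcases div_pos_iff.mp h1 with ⟨hA0, hD0⟩ | ⟨hA0, hD0⟩
    · have hB0 : B < 0 := by
        rcases div_neg_iff.mp h2 with ⟨h, h'⟩ | ⟨h, h'⟩ <;> linarith
      exact absurd (hAB hA0) (by linarith)
    · have hB0 : 0 < B := by
        rcases div_neg_iff.mp h2 with ⟨h, h'⟩ | ⟨h, h'⟩ <;> linarith
      have hC0 : C < 0 := by
        rcases div_pos_iff.mp h3 with ⟨h, h'⟩ | ⟨h, h'⟩ <;> linarith
      exact absurd (hBC hB0) (by linarith)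
  · rintro ⟨h1, h2, h3⟩
    rcases div_pos_iff.mp h2 with ⟨hB0, hD0⟩ | ⟨hB0, hD0⟩
    · have hC0 : C < 0 := by
        rcases div_neg_iff.mp h3 with ⟨h, h'⟩ | ⟨h, h'⟩ <;> linarith
      exact absurd (hBC hB0) (by linarith)
    · have hA0 : 0 < A := by
        rcases div_neg_iff.mp h1 with ⟨h, h'⟩ | ⟨h, h'⟩ <;> linarith
      exact absurd (hAB hA0) (by linarith)
end

section
/- Let S_j = (x_j, y_j) ∈ ℝ² for j = 1, 2, 3 with x_1 < x_2 < x_3, and let δ_1, δ_2, δ_3 > 0. Then the pivot point P_3 = (x̃_3, ỹ_3) of the rightmost point S_3 lies on the segment joining S_1 and S_2 (i.e., in the convex hull of {S_1, S_2}), and the pivot point P_1 = (x̃_1, ỹ_1) of the leftmost point S_1 lies on the segment joining S_2 and S_3 (i.e., in the convex hull of {S_2, S_3}). -/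
lemma div_nonneg_of_nonpos_of_nonpos {a b : ℝ} (ha : a ≤ 0) (hb : b ≤ 0) : 0 ≤ a / b := by
  rcases eq_or_lt_of_le hb with rfl | hb
  · simp
  · rw [div_nonneg_iff]; right; exact ⟨ha, hb.le⟩

/-- With three points x₁ < x₂ < x₃ and positive weights, the pivot
point of the rightmost point S₃ lies on the segment joining S₁ and S₂, and the
pivot point of the leftmost point S₁ lies on the segment joining S₂ and S₃. -/
theorem stmt_9 (x₁ x₂ x₃ y₁ y₂ y₃ δ₁ δ₂ δ₃ : ℝ)
    (h12 : x₁ < x₂) (h23 : x₂ < x₃)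
    (hδ₁ : 0 < δ₁) (hδ₂ : 0 < δ₂) (hδ₃ : 0 < δ₃) :
    ((x₃ + (δ₁ * (x₁ - x₃) ^ 2 + δ₂ * (x₂ - x₃) ^ 2 + δ₃ * (x₃ - x₃) ^ 2) /
            (δ₁ * (x₁ - x₃) + δ₂ * (x₂ - x₃) + δ₃ * (x₃ - x₃)),
      y₃ + (δ₁ * (x₁ - x₃) * (y₁ - y₃) + δ₂ * (x₂ - x₃) * (y₂ - y₃) +
              δ₃ * (x₃ - x₃) * (y₃ - y₃)) /
            (δ₁ * (x₁ - x₃) + δ₂ * (x₂ - x₃) + δ₃ * (x₃ - x₃))) : ℝ × ℝ) ∈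
      convexHull ℝ ({(x₁, y₁), (x₂, y₂)} : Set (ℝ × ℝ)) ∧
    ((x₁ + (δ₁ * (x₁ - x₁) ^ 2 + δ₂ * (x₂ - x₁) ^ 2 + δ₃ * (x₃ - x₁) ^ 2) /
            (δ₁ * (x₁ - x₁) + δ₂ * (x₂ - x₁) + δ₃ * (x₃ - x₁)),
      y₁ + (δ₁ * (x₁ - x₁) * (y₁ - y₁) + δ₂ * (x₂ - x₁) * (y₂ - y₁) +
              δ₃ * (x₃ - x₁) * (y₃ - y₁)) /
            (δ₁ * (x₁ - x₁) + δ₂ * (x₂ - x₁) + δ₃ * (x₃ - x₁))) : ℝ × ℝ) ∈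
      convexHull ℝ ({(x₂, y₂), (x₃, y₃)} : Set (ℝ × ℝ)) := by
  simp only [sub_self, mul_zero, zero_mul, add_zero]
  constructor
  · rw [convexHull_pair]
    have ha : δ₁ * (x₁ - x₃) < 0 := mul_neg_of_pos_of_neg hδ₁ (by linarith)
    have hb : δ₂ * (x₂ - x₃) < 0 := mul_neg_of_pos_of_neg hδ₂ (by linarith)
    have hab : δ₁ * (x₁ - x₃) + δ₂ * (x₂ - x₃) < 0 := by linarith
    have hne : δ₁ * (x₁ - x₃) + δ₂ * (x₂ - x₃) ≠ 0 := ne_of_lt hab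
    refine ⟨δ₁ * (x₁ - x₃) / (δ₁ * (x₁ - x₃) + δ₂ * (x₂ - x₃)),
            δ₂ * (x₂ - x₃) / (δ₁ * (x₁ - x₃) + δ₂ * (x₂ - x₃)),
            div_nonneg_of_nonpos_of_nonpos ha.le hab.le,
            div_nonneg_of_nonpos_of_nonpos hb.le hab.le,
            by field_simp, ?_⟩
    simp only [Prod.smul_mk, smul_eq_mul, Prod.mk_add_mk, Prod.mk.injEq]
    constructor <;> field_simp <;> ring
  · rw [convexHull_pair]
    have ha : 0 < δ₂ * (x₂ - x₁) := mul_pos hδ₂ (by linarith)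
    have hb : 0 < δ₃ * (x₃ - x₁) := mul_pos hδ₃ (by linarith)
    have hab : 0 < δ₂ * (x₂ - x₁) + δ₃ * (x₃ - x₁) := by linarith
    have hne : δ₂ * (x₂ - x₁) + δ₃ * (x₃ - x₁) ≠ 0 := ne_of_gt hab
    refine ⟨δ₂ * (x₂ - x₁) / (δ₂ * (x₂ - x₁) + δ₃ * (x₃ - x₁)),
            δ₃ * (x₃ - x₁) / (δ₂ * (x₂ - x₁) + δ₃ * (x₃ - x₁)),
            div_nonneg ha.le hab.le, div_nonneg hb.le hab.le,
            by field_simp, ?_⟩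
    simp only [Prod.smul_mk, smul_eq_mul, Prod.mk_add_mk, Prod.mk.injEq]
    constructor <;> field_simp <;> ring
end

section
/- Let S_j = (x_j, y_j) ∈ ℝ² for j = 1, 2, 3 with x_1 < x_2 < x_3, let δ_1, δ_3 > 0, and assume D = δ_1(x_1 − x_2) + δ_3(x_3 − x_2) ≠ 0. Then the pivot point P_2 of the inner point S_2 satisfies P_2 = λ_1·S_1 + λ_3·S_3 with λ_1 = δ_1(x_1 − x_2)/D, λ_3 = δ_3(x_3 − x_2)/D, λ_1 + λ_3 = 1, and either λ_1 < 0 or λ_1 > 1. That is, P_2 lies on the line through S_1 and S_3 but strictly outside the closed segment between them. -/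
/-- With three points x₁ < x₂ < x₃, the pivot point P₂ of the
inner point is the affine combination λ₁·S₁ + λ₃·S₃ with λ₁ + λ₃ = 1 and
λ₁ < 0 or λ₁ > 1: it lies on the line through S₁ and S₃ but strictly outside
the closed segment between them. -/
theorem stmt_10 (x₁ x₂ x₃ y₁ y₂ y₃ δ₁ δ₃ : ℝ)
    (h12 : x₁ < x₂) (h23 : x₂ < x₃) (hδ₁ : 0 < δ₁) (hδ₃ : 0 < δ₃)
    (hD : δ₁ * (x₁ - x₂) + δ₃ * (x₃ - x₂) ≠ 0) :
    ((x₂ + (δ₁ * (x₁ - x₂) ^ 2 + δ₃ * (x₃ - x₂) ^ 2) /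
            (δ₁ * (x₁ - x₂) + δ₃ * (x₃ - x₂)),
      y₂ + (δ₁ * (x₁ - x₂) * (y₁ - y₂) + δ₃ * (x₃ - x₂) * (y₃ - y₂)) /
            (δ₁ * (x₁ - x₂) + δ₃ * (x₃ - x₂))) : ℝ × ℝ)
      = (δ₁ * (x₁ - x₂) / (δ₁ * (x₁ - x₂) + δ₃ * (x₃ - x₂))) • ((x₁, y₁) : ℝ × ℝ)
        + (δ₃ * (x₃ - x₂) / (δ₁ * (x₁ - x₂) + δ₃ * (x₃ - x₂))) • ((x₃, y₃) : ℝ × ℝ) ∧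
    δ₁ * (x₁ - x₂) / (δ₁ * (x₁ - x₂) + δ₃ * (x₃ - x₂)) +
      δ₃ * (x₃ - x₂) / (δ₁ * (x₁ - x₂) + δ₃ * (x₃ - x₂)) = 1 ∧
    (δ₁ * (x₁ - x₂) / (δ₁ * (x₁ - x₂) + δ₃ * (x₃ - x₂)) < 0 ∨
      1 < δ₁ * (x₁ - x₂) / (δ₁ * (x₁ - x₂) + δ₃ * (x₃ - x₂))) := by
  set a := x₁ - x₂ with ha
  set b := x₃ - x₂ with hb
  have ha0 : a < 0 := by simp [ha]; linarith
  have hb0 : 0 < b := by simp [hb]; linarith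
  refine ⟨?_, ?_, ?_⟩
  · have := hD
    apply Prod.ext <;> simp [Prod.smul_mk] <;> field_simp <;> ring
  · field_simp
  · rcases lt_or_gt_of_ne hD with hneg | hpos
    · right
      rw [lt_div_iff_of_neg hneg]
      nlinarith
    · left
      apply div_neg_of_neg_of_pos _ hpos
      nlinarith
end

section
/- Let (χ_j, γ_j) ∈ ℝ² for j = 1,…,n be S_i-centric coordinates, fix an index r with χ_r ≠ 0, set A = Σ_{j=1}^n χ_j², B = Σ_{j=1}^n χ_j, C = Σ_{j=1}^n χ_j γ_j, and assume B ≠ 0. For k ∈ ℕ with k·χ_r + B ≠ 0, setting t_k = k·χ_r/(k·χ_r + B), the pivot point of S_i under k repetitions of S_r satisfies ((k·χ_r² + A)/(k·χ_r + B), (k·χ_r·γ_r + C)/(k·χ_r + B)) = t_k·(χ_r, γ_r) + (1 − t_k)·(A/B, C/B). That is, as S_r is repeated, the pivot point corresponding to S_i moves along the straight line through the original (unrepeated) pivot point (A/B, C/B) and the repeated point (χ_r, γ_r). -/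
/-- As S_r is repeated k times, the pivot point of S_i moves along
the straight line through the original pivot point (A/B, C/B) and the repeated
point (χ_r, γ_r): it equals t_k·(χ_r, γ_r) + (1 − t_k)·(A/B, C/B) with
t_k = k·χ_r/(k·χ_r + B). -/
theorem stmt_11 (n : ℕ) (χ γ : Fin n → ℝ) (r : Fin n) (hr : χ r ≠ 0)
    (hB : (∑ j, χ j) ≠ 0) (k : ℕ) (hk : (k : ℝ) * χ r + ∑ j, χ j ≠ 0) :
    ((((k : ℝ) * (χ r) ^ 2 + ∑ j, (χ j) ^ 2) / ((k : ℝ) * χ r + ∑ j, χ j),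
      ((k : ℝ) * χ r * γ r + ∑ j, χ j * γ j) / ((k : ℝ) * χ r + ∑ j, χ j)) : ℝ × ℝ)
      = ((k : ℝ) * χ r / ((k : ℝ) * χ r + ∑ j, χ j)) • ((χ r, γ r) : ℝ × ℝ)
        + (1 - (k : ℝ) * χ r / ((k : ℝ) * χ r + ∑ j, χ j)) •
            (((∑ j, (χ j) ^ 2) / (∑ j, χ j),
              (∑ j, χ j * γ j) / (∑ j, χ j)) : ℝ × ℝ) := by
  simp only [Prod.smul_mk, Prod.mk_add_mk, Prod.mk.injEq, smul_eq_mul]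
  constructor <;> field_simp <;> ring
end

section
/- Let n ≥ 2, let S_j = (x_j, y_j) ∈ ℝ² for j = 1,…,n with x_j ≤ x_n for all j and x_j < x_n for at least one j, and let δ_1,…,δ_n > 0. Then the pivot point P_n = (x̃_n, ỹ_n) of S_n, where x̃_n = x_n + (Σ_{j=1}^n δ_j(x_j − x_n)²)/(Σ_{j=1}^n δ_j(x_j − x_n)) and ỹ_n = y_n + (Σ_{j=1}^n δ_j(x_j − x_n)(y_j − y_n))/(Σ_{j=1}^n δ_j(x_j − x_n)), lies in the convex hull of {S_1,…,S_{n−1}}. That is, with n points, the pivot points corresponding to the rightmost point on the x-axis are bounded by the convex hull of the other n − 1 points. -/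
/-- With n ≥ 2 points whose rightmost point (on the x-axis) is the
last one, and positive weights, the pivot point of the rightmost point lies in
the convex hull of the other n − 1 points. -/
theorem stmt_12 (n : ℕ) (hn : 1 ≤ n) (x y δ : Fin (n + 1) → ℝ)
    (hmax : ∀ j, x j ≤ x (Fin.last n)) (hlt : ∃ j, x j < x (Fin.last n))
    (hδ : ∀ j, 0 < δ j) :
    ((x (Fin.last n) +
        (∑ j, δ j * (x j - x (Fin.last n)) ^ 2) /
          (∑ j, δ j * (x j - x (Fin.last n))),
      y (Fin.last n) +
        (∑ j, δ j * (x j - x (Fin.last n)) * (y j - y (Fin.last n))) /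
          (∑ j, δ j * (x j - x (Fin.last n)))) : ℝ × ℝ) ∈
      convexHull ℝ ((fun j => ((x j, y j) : ℝ × ℝ)) '' {j | j ≠ Fin.last n}) := by
  set L := Fin.last n with hL
  set D : ℝ := ∑ j, δ j * (x j - x L) with hD
  set w : Fin (n + 1) → ℝ := fun j => δ j * (x L - x j) with hw
  have hDneg : D < 0 := by
    obtain ⟨j0, hj0⟩ := hlt
    have : D < ∑ j : Fin (n + 1), (0 : ℝ) := by
      apply Finset.sum_lt_sum
      · intro i _
        have := hmax i
        nlinarith [hδ i]
      · exact ⟨j0, Finset.mem_univ _, by nlinarith [hδ j0]⟩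
    simpa using this
  have hDne : D ≠ 0 := ne_of_lt hDneg
  have hwL : w L = 0 := by simp [hw]
  clear_value D w
  have hwsum : ∑ j ∈ Finset.univ.erase L, w j = -D := by
    rw [Finset.sum_erase _ hwL, hD, ← Finset.sum_neg_distrib]
    exact Finset.sum_congr rfl fun j _ => by simp [hw]; ring
  have hkey :
      ((x L + (∑ j, δ j * (x j - x L) ^ 2) / D,
        y L + (∑ j, δ j * (x j - x L) * (y j - y L)) / D) : ℝ × ℝ)
        = (Finset.univ.erase L).centerMass w (fun j => ((x j, y j) : ℝ × ℝ)) := by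
    rw [Finset.centerMass, hwsum]
    have hfst : (∑ j ∈ Finset.univ.erase L, w j • ((x j, y j) : ℝ × ℝ)).1
        = ∑ j, w j * x j := by
      rw [Prod.fst_sum, Finset.sum_erase _ (by simp [hwL])]
      rfl
    have hsnd : (∑ j ∈ Finset.univ.erase L, w j • ((x j, y j) : ℝ × ℝ)).2
        = ∑ j, w j * y j := by
      rw [Prod.snd_sum, Finset.sum_erase _ (by simp [hwL])]
      rfl
    have hBx : ∑ j, w j * x j = -(∑ j, δ j * (x j - x L) ^ 2) - D * x L := by
      rw [hD, Finset.sum_mul, ← Finset.sum_neg_distrib, ← Finset.sum_sub_distrib]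
      exact Finset.sum_congr rfl fun j _ => by simp [hw]; ring
    have hBy : ∑ j, w j * y j
        = -(∑ j, δ j * (x j - x L) * (y j - y L)) - D * y L := by
      rw [hD, Finset.sum_mul, ← Finset.sum_neg_distrib, ← Finset.sum_sub_distrib]
      exact Finset.sum_congr rfl fun j _ => by simp [hw]; ring
    apply Prod.ext
    · rw [Prod.smul_fst, hfst, hBx, smul_eq_mul]
      generalize (∑ j, δ j * (x j - x L) ^ 2) = A
      field_simp [hDne]
      ring
    · rw [Prod.smul_snd, hsnd, hBy, smul_eq_mul]
      generalize (∑ j, δ j * (x j - x L) * (y j - y L)) = C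
      field_simp [hDne]
      ring
  rw [hkey]
  apply Finset.centerMass_mem_convexHull
  · intro i hi
    have := hmax i
    have := hδ i
    simp only [hw]
    nlinarith
  · rw [hwsum]; linarith
  · intro i hi
    exact ⟨i, Finset.mem_erase.mp hi |>.1, rfl⟩
end

section
/- Let n ≥ 2, let S_j = (x_j, y_j) ∈ ℝ² for j = 1,…,n with x_1 ≤ x_j for all j and x_1 < x_j for at least one j, and let δ_1,…,δ_n > 0. Then the pivot point P_1 = (x̃_1, ỹ_1) of S_1, where x̃_1 = x_1 + (Σ_{j=1}^n δ_j(x_j − x_1)²)/(Σ_{j=1}^n δ_j(x_j − x_1)) and ỹ_1 = y_1 + (Σ_{j=1}^n δ_j(x_j − x_1)(y_j − y_1))/(Σ_{j=1}^n δ_j(x_j − x_1)), lies in the convex hull of {S_2,…,S_n}. That is, with n points, the pivot points corresponding to the leftmost point on the x-axis are bounded by the convex hull of the other n − 1 points. -/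
/-- With n ≥ 2 points whose leftmost point (on the x-axis) is the
first one, and positive weights, the pivot point of the leftmost point lies in
the convex hull of the other n − 1 points. -/
theorem stmt_13 (n : ℕ) (hn : 1 ≤ n) (x y δ : Fin (n + 1) → ℝ)
    (hmin : ∀ j, x 0 ≤ x j) (hlt : ∃ j, x 0 < x j)
    (hδ : ∀ j, 0 < δ j) :
    ((x 0 + (∑ j, δ j * (x j - x 0) ^ 2) / (∑ j, δ j * (x j - x 0)),
      y 0 + (∑ j, δ j * (x j - x 0) * (y j - y 0)) /
          (∑ j, δ j * (x j - x 0))) : ℝ × ℝ) ∈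
      convexHull ℝ ((fun j => ((x j, y j) : ℝ × ℝ)) '' {j | j ≠ (0 : Fin (n + 1))}) := by
  classical
  set w : Fin (n + 1) → ℝ := fun j => δ j * (x j - x 0) with hw
  have hw0 : ∀ j, 0 ≤ w j := fun j => mul_nonneg (hδ j).le (sub_nonneg.2 (hmin j))
  have hD : 0 < ∑ j, w j := by
    obtain ⟨j, hj⟩ := hlt
    exact Finset.sum_pos' (fun i _ => hw0 i)
      ⟨j, Finset.mem_univ j, mul_pos (hδ j) (sub_pos.2 hj)⟩
  set t : Finset (Fin (n + 1)) := Finset.univ.erase 0 with ht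
  have hw00 : w 0 = 0 := by simp [hw]
  have hDt : ∑ j ∈ t, w j = ∑ j, w j := by
    rw [ht, Finset.sum_erase _ hw00]
  have hDne : (∑ j, w j) ≠ 0 := ne_of_gt hD
  have key : ((x 0 + (∑ j, δ j * (x j - x 0) ^ 2) / (∑ j, δ j * (x j - x 0)),
      y 0 + (∑ j, δ j * (x j - x 0) * (y j - y 0)) /
          (∑ j, δ j * (x j - x 0))) : ℝ × ℝ)
      = t.centerMass w (fun j => ((x j, y j) : ℝ × ℝ)) := by
    rw [Finset.centerMass, hDt, Prod.ext_iff]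
    constructor
    · simp only [Prod.smul_fst, Prod.fst_sum, smul_eq_mul]
      have h1 : ∑ j ∈ t, w j * x j = ∑ j, w j * x j :=
        Finset.sum_erase _ (by simp [hw00])
      have h2 : ∑ j, w j * x j
          = (∑ j, δ j * (x j - x 0) ^ 2) + (∑ j, w j) * x 0 := by
        rw [Finset.sum_mul, ← Finset.sum_add_distrib]
        refine Finset.sum_congr rfl fun j _ => ?_
        simp only [hw]; ring
      rw [h1, h2]
      simp only [hw] at hDne ⊢
      field_simp
      ring
    · simp only [Prod.smul_snd, Prod.snd_sum, smul_eq_mul]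
      have h1 : ∑ j ∈ t, w j * y j = ∑ j, w j * y j :=
        Finset.sum_erase _ (by simp [hw00])
      have h2 : ∑ j, w j * y j
          = (∑ j, δ j * (x j - x 0) * (y j - y 0)) + (∑ j, w j) * y 0 := by
        rw [Finset.sum_mul, ← Finset.sum_add_distrib]
        refine Finset.sum_congr rfl fun j _ => ?_
        simp only [hw]; ring
      rw [h1, h2]
      simp only [hw] at hDne ⊢
      field_simp
      ring
  rw [key]
  refine Finset.centerMass_mem_convexHull t (fun i _ => hw0 i) (hDt ▸ hD) fun i hi => ?_
  exact ⟨i, (Finset.mem_erase.1 hi).1, rfl⟩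
end

section
/- Let S_j = (x_j, y_j) ∈ ℝ² for j = 1,…,n, let δ_1,…,δ_n > 0, fix an index i, and assume Σ_{j=1}^n δ_j(x_j − x_i) ≠ 0. If (m, b) ∈ ℝ² is a global minimizer of the weighted least-squares error E(m, b) = Σ_{j=1}^n δ_j·(m·x_j + b − y_j)², then m·x̃_i + b = ỹ_i, where x̃_i = x_i + (Σ_{j=1}^n δ_j(x_j − x_i)²)/(Σ_{j=1}^n δ_j(x_j − x_i)) and ỹ_i = y_i + (Σ_{j=1}^n δ_j(x_j − x_i)(y_j − y_i))/(Σ_{j=1}^n δ_j(x_j − x_i)). That is, the least-squares regression line for the multiset in which each S_j appears δ_j times passes through the pivot point P_i = (x̃_i, ỹ_i). -/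
/-- Any global minimizer (m, b) of the weighted least-squares
error E(m, b) = ∑ δ_j(m·x_j + b − y_j)² satisfies m·x̃_i + b = ỹ_i: the
weighted regression line passes through the pivot point P_i = (x̃_i, ỹ_i). -/
theorem stmt_15 (n : ℕ) (x y δ : Fin n → ℝ) (hδ : ∀ j, 0 < δ j) (i : Fin n)
    (hD : (∑ j, δ j * (x j - x i)) ≠ 0) (m b : ℝ)
    (hmin : ∀ m' b' : ℝ,
      ∑ j, δ j * (m * x j + b - y j) ^ 2 ≤ ∑ j, δ j * (m' * x j + b' - y j) ^ 2) :
    m * (x i + (∑ j, δ j * (x j - x i) ^ 2) / (∑ j, δ j * (x j - x i))) + b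
      = y i + (∑ j, δ j * (x j - x i) * (y j - y i)) /
          (∑ j, δ j * (x j - x i)) := by
  -- key: first-order condition in any direction (u, v)
  have key : ∀ u v : ℝ,
      (∑ j, 2 * (δ j * (m * x j + b - y j) * (u * x j + v))) = 0 := by
    intro u v
    set L : ℝ := ∑ j, 2 * (δ j * (m * x j + b - y j) * (u * x j + v)) with hL
    set Q : ℝ := ∑ j, δ j * (u * x j + v) ^ 2 with hQ
    have hQ0 : 0 ≤ Q := Finset.sum_nonneg fun j _ =>
      mul_nonneg (hδ j).le (sq_nonneg _)
    have hq : ∀ t : ℝ, 0 ≤ t * L + t ^ 2 * Q := by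
      intro t
      have h := hmin (m + t * u) (b + t * v)
      have expand : (∑ j, δ j * ((m + t * u) * x j + (b + t * v) - y j) ^ 2)
          = (∑ j, δ j * (m * x j + b - y j) ^ 2) + t * L + t ^ 2 * Q := by
        rw [hL, hQ, Finset.mul_sum, Finset.mul_sum, ← Finset.sum_add_distrib,
          ← Finset.sum_add_distrib]
        exact Finset.sum_congr rfl fun j _ => by ring
      rw [expand] at h
      linarith
    by_contra hLne
    have hp : (0:ℝ) < (Q + 1) ^ 2 := by positivity
    have ht := hq (-L / (Q + 1))
    have h2 : (-L / (Q + 1)) * L + (-L / (Q + 1)) ^ 2 * Q = -L ^ 2 / (Q + 1) ^ 2 := by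
      field_simp
      ring
    rw [h2] at ht
    have h3 := (le_div_iff₀ hp).mp ht
    have hL2 : L ^ 2 = 0 := le_antisymm (by linarith) (sq_nonneg L)
    exact hLne (sq_eq_zero_iff.mp hL2)
  have e3 : (∑ j, 2 * (δ j * (m * x j + b - y j) * (1 * x j + (-x i)))) = 0 :=
    key 1 (-x i)
  set D : ℝ := ∑ j, δ j * (x j - x i) with hDdef
  set A : ℝ := ∑ j, δ j * (x j - x i) ^ 2 with hA
  set C : ℝ := ∑ j, δ j * (x j - x i) * (y j - y i) with hC
  have split : (∑ j, 2 * (δ j * (m * x j + b - y j) * (1 * x j + (-x i))))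
      = ∑ j, (m * (δ j * (x j - x i) ^ 2)
          + (m * x i + b - y i) * (δ j * (x j - x i))
          - 2 * (δ j * (x j - x i) * (y j - y i))
          + (m * (δ j * (x j - x i) ^ 2)
            + (m * x i + b - y i) * (δ j * (x j - x i)))) :=
    Finset.sum_congr rfl fun j _ => by ring
  simp only [Finset.sum_add_distrib, Finset.sum_sub_distrib, ← Finset.mul_sum,
    ← hA, ← hC, ← hDdef] at split
  simp only [← Finset.mul_sum] at e3
  rw [split] at e3
  have hkey : m * A + (m * x i + b - y i) * D = C := by linarith
  field_simp
  nlinarith [hkey]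
end
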